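/- Fix an integer N ≥ 1, a positive integer K, real constants C1 and Csync, and a symmetric matrix J : Fin N → Fin N → ℝ (J i j = J j i). Let F : ℝ → ℝ be differentiable and even, and set S = −F′. For φ : Fin N → ℝ define the energy E(φ) = −(K·C1/2)·Σ_{i} Σ_{j ≠ i} J i j · F(φ i − φ j) − Csync·Σ_i cos(K·φ i), and the vector field V i (φ) = −C1·Σ_{j ≠ i} J i j · S(φ i − φ j) − Csync·sin(K·φ i). Then for every φ and every index i, the partial derivative of E with respect to the i-th coordinate at φ exists and equals −K · V i (φ). -/

import Mathlib

/-- the partial derivative of the oscillator energy `E` with respect to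
the `i`-th coordinate at `φ` exists and equals `−K · V i φ`, where `V` is the
oscillator vector field and `S = −F′`. -/
theorem stmt_0 (N : ℕ) (hN : 1 ≤ N) (K : ℕ) (hK : 0 < K) (C1 Csync : ℝ)
    (J : Fin N → Fin N → ℝ) (hJ : ∀ i j, J i j = J j i)
    (F : ℝ → ℝ) (hF : Differentiable ℝ F) (hFeven : ∀ x, F (-x) = F x)
    (S : ℝ → ℝ) (hS : ∀ x, S x = -(deriv F x))
    (E : (Fin N → ℝ) → ℝ)
    (hE : ∀ φ : Fin N → ℝ, E φ =
      -((K : ℝ) * C1 / 2) * ∑ a, ∑ b ∈ Finset.univ.erase a, J a b * F (φ a - φ b)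
        - Csync * ∑ a, Real.cos ((K : ℝ) * φ a))
    (V : Fin N → (Fin N → ℝ) → ℝ)
    (hV : ∀ (i : Fin N) (φ : Fin N → ℝ), V i φ =
      -C1 * ∑ j ∈ Finset.univ.erase i, J i j * S (φ i - φ j)
        - Csync * Real.sin ((K : ℝ) * φ i))
    (φ : Fin N → ℝ) (i : Fin N) :
    HasDerivAt (fun x : ℝ => E (Function.update φ i x)) (-(K : ℝ) * V i φ) (φ i) := by
  have key : ∀ x : ℝ, E (Function.update φ i x) =
      -((K : ℝ) * C1 / 2) * ((∑ b ∈ Finset.univ.erase i, J i b * F (x - φ b))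
        + ∑ a ∈ Finset.univ.erase i, (J a i * F (φ a - x)
          + ∑ b ∈ (Finset.univ.erase a).erase i, J a b * F (φ a - φ b)))
      - Csync * (Real.cos ((K : ℝ) * x)
        + ∑ a ∈ Finset.univ.erase i, Real.cos ((K : ℝ) * φ a)) := by
    intro x
    rw [hE]
    congr 1
    · congr 1
      rw [← Finset.add_sum_erase _ _ (Finset.mem_univ i)]
      congr 1
      · apply Finset.sum_congr rfl
        intro b hb
        have hbi : b ≠ i := Finset.ne_of_mem_erase hb
        simp [Function.update_apply, hbi]
      · apply Finset.sum_congr rfl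
        intro a ha
        have hai : a ≠ i := Finset.ne_of_mem_erase ha
        have hi' : i ∈ Finset.univ.erase a :=
          Finset.mem_erase.mpr ⟨hai.symm, Finset.mem_univ i⟩
        rw [← Finset.add_sum_erase _ _ hi']
        congr 1
        · simp [Function.update_apply, hai]
        · apply Finset.sum_congr rfl
          intro b hb
          have hbi : b ≠ i := (Finset.mem_erase.mp hb).1
          simp [Function.update_apply, hbi, hai]
    · congr 1
      rw [← Finset.add_sum_erase _ _ (Finset.mem_univ i)]
      congr 1
      · simp
      · apply Finset.sum_congr rfl
        intro a ha
        simp [Function.update_apply, Finset.ne_of_mem_erase ha]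
  have hcomp : ∀ c : ℝ, HasDerivAt (fun x => F (x - c)) (deriv F (φ i - c)) (φ i) := by
    intro c
    have h1 : HasDerivAt (fun x : ℝ => x - c) 1 (φ i) := (hasDerivAt_id _).sub_const c
    have := ((hF (φ i - c)).hasDerivAt).comp (φ i) h1
    exact this.congr_deriv (mul_one _)
  have hcomp2 : ∀ c : ℝ, HasDerivAt (fun x => F (c - x)) (deriv F (φ i - c)) (φ i) := by
    intro c
    have heq : (fun x : ℝ => F (c - x)) = fun x : ℝ => F (x - c) := by
      funext x
      rw [← hFeven (x - c)]
      ring_nf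
    rw [heq]
    exact hcomp c
  have hsum1 : HasDerivAt (fun x => ∑ b ∈ Finset.univ.erase i, J i b * F (x - φ b))
      (∑ b ∈ Finset.univ.erase i, J i b * deriv F (φ i - φ b)) (φ i) :=
    HasDerivAt.fun_sum fun b _ => (hcomp (φ b)).const_mul _
  have hsum2 : HasDerivAt (fun x => ∑ a ∈ Finset.univ.erase i, (J a i * F (φ a - x)
      + ∑ b ∈ (Finset.univ.erase a).erase i, J a b * F (φ a - φ b)))
      (∑ a ∈ Finset.univ.erase i, J a i * deriv F (φ i - φ a)) (φ i) :=
    HasDerivAt.fun_sum fun a _ => ((hcomp2 (φ a)).const_mul _).add_const _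
  have hcos : HasDerivAt (fun x : ℝ => Real.cos ((K : ℝ) * x))
      (-Real.sin ((K : ℝ) * φ i) * (K : ℝ)) (φ i) := by
    have h1 : HasDerivAt (fun x : ℝ => (K : ℝ) * x) (K : ℝ) (φ i) := by
      simpa using (hasDerivAt_id (φ i)).const_mul (K : ℝ)
    exact (Real.hasDerivAt_cos _).comp _ h1
  have total := (((hsum1.add hsum2).const_mul (-((K : ℝ) * C1 / 2))).sub
    ((hcos.add_const (∑ a ∈ Finset.univ.erase i, Real.cos ((K : ℝ) * φ a))).const_mul Csync))
  have hfun : (fun x : ℝ => E (Function.update φ i x)) =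
      fun x : ℝ => -((K : ℝ) * C1 / 2) * ((∑ b ∈ Finset.univ.erase i, J i b * F (x - φ b))
        + ∑ a ∈ Finset.univ.erase i, (J a i * F (φ a - x)
          + ∑ b ∈ (Finset.univ.erase a).erase i, J a b * F (φ a - φ b)))
      - Csync * (Real.cos ((K : ℝ) * x)
        + ∑ a ∈ Finset.univ.erase i, Real.cos ((K : ℝ) * φ a)) := funext key
  rw [hfun]
  refine HasDerivAt.congr_deriv total ?_
  have hswap : ∑ a ∈ Finset.univ.erase i, J a i * deriv F (φ i - φ a)
      = ∑ b ∈ Finset.univ.erase i, J i b * deriv F (φ i - φ b) := by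
    apply Finset.sum_congr rfl
    intro a _
    rw [hJ a i]
  rw [hswap, hV]
  simp only [hS, mul_neg, Finset.sum_neg_distrib]
  ring
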